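/- Let n ≤ r < 2n and let A ∈ 𝓟^r_{2n}(M_n), i.e., A is an r-subset of V(M_n) containing the vertex 2n which is independent or contains an independent set of size n. Then there exists a good cyclic ordering c of V(M_n) with c(0) = 2n such that A is a c-interval of length r, i.e., A = {c(j), c(j+1), …, c(j+r−1)} for some index j ∈ ℤ/2nℤ. -/

import Mathlib

/-- The partner of a vertex `v` in the perfect matching `Mₙ` on `{1,…,2n}`:
vertices `i` and `i+n` (for `1 ≤ i ≤ n`) are joined by an edge. -/
def partnerMn (n v : ℕ) : ℕ := if v ≤ n then v + n else v - n

/-- `A` is an independent set of vertices of the perfect matching graph `Mₙ`. -/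
def IsIndepMn (n : ℕ) (A : Finset ℕ) : Prop :=
  A ⊆ Finset.Icc 1 (2 * n) ∧ ∀ i ∈ Finset.Icc 1 n, ¬(i ∈ A ∧ i + n ∈ A)

/-- The independence number `α(Mₙ)` of the perfect matching graph `Mₙ`. -/
noncomputable def indepNumMn (n : ℕ) : ℕ := sSup {k : ℕ | ∃ A : Finset ℕ, IsIndepMn n A ∧ A.card = k}

/-- `𝓘ʳ(Mₙ)`: the family of all independent `r`-subsets of `V(Mₙ)`. -/
def famI (n r : ℕ) : Set (Finset ℕ) := {A | A.card = r ∧ IsIndepMn n A}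

/-- `𝓜ʳ(Mₙ)`: the family of all `r`-subsets of `V(Mₙ)` containing an
independent set of maximum size `α(Mₙ)`. -/
def famM (n r : ℕ) : Set (Finset ℕ) :=
  {A | A ⊆ Finset.Icc 1 (2 * n) ∧ A.card = r ∧
    ∃ B ⊆ A, IsIndepMn n B ∧ B.card = indepNumMn n}

/-- `𝓟ʳ(Mₙ) = 𝓘ʳ(Mₙ) ∪ 𝓜ʳ(Mₙ)`. -/
def famP (n r : ℕ) : Set (Finset ℕ) := famI n r ∪ famM n r

/-- A family is `k`-wise intersecting: any `k` (not necessarily distinct) members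
have a common element. -/
def KWiseIntersecting (k : ℕ) (𝓕 : Finset (Finset ℕ)) : Prop :=
  ∀ f : Fin k → Finset ℕ, (∀ i, f i ∈ 𝓕) → ∃ v, ∀ i, v ∈ f i

/-- A good cyclic ordering of `V(Mₙ)`: a bijection `c : ℤ/2nℤ → {1,…,2n}` such that
`c(i+n)` is always the partner of `c(i)`. -/
def IsGoodCyclic (n : ℕ) (c : ZMod (2 * n) → ℕ) : Prop :=
  Function.Injective c ∧ (∀ i, c i ∈ Finset.Icc 1 (2 * n)) ∧
    ∀ i, c (i + (n : ZMod (2 * n))) = partnerMn n (c i)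

/-- The `c`-interval of length `r` beginning at index `x`: `{c(x), c(x+1), …, c(x+r−1)}`. -/
def gInterval (n : ℕ) (c : ZMod (2 * n) → ℕ) (r : ℕ) (x : ZMod (2 * n)) : Finset ℕ :=
  (Finset.range r).image fun j : ℕ => c (x + (j : ZMod (2 * n)))

/-- `c` is saturated with respect to `𝓕`: exactly `r` members of `𝓕` are
`c`-intervals of length `r`. -/
def Saturated (n r : ℕ) (𝓕 : Finset (Finset ℕ)) (c : ZMod (2 * n) → ℕ) : Prop :=
  {A : Finset ℕ | A ∈ 𝓕 ∧ ∃ x, A = gInterval n c r x}.ncard = r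

/-- `c` is `x`-saturated with respect to `𝓕`: it is saturated and every member of `𝓕`
that is a `c`-interval contains the index `x` (equivalently, the element `c(x)`). -/
def XSaturated (n r : ℕ) (𝓕 : Finset (Finset ℕ)) (c : ZMod (2 * n) → ℕ)
    (x : ZMod (2 * n)) : Prop :=
  Saturated n r 𝓕 c ∧ ∀ A ∈ 𝓕, (∃ y, A = gInterval n c r y) → c x ∈ A


lemma partner_invol (n v : ℕ) (h1 : 1 ≤ v) (h2 : v ≤ 2*n) :
    partnerMn n (partnerMn n v) = v := by
  simp only [partnerMn]; split_ifs <;> omega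

/-- the "small index" map -/
def gMn (n v : ℕ) : ℕ := if v ≤ n then v else v - n

lemma gMn_injOn (n : ℕ) (B : Finset ℕ) (hB : IsIndepMn n B) : Set.InjOn (gMn n) B := by
  intro v hv w hw hvw
  simp only [Finset.mem_coe] at hv hw
  have hv2 := hB.1 hv; have hw2 := hB.1 hw
  simp only [Finset.mem_Icc] at hv2 hw2
  simp only [gMn] at hvw
  by_contra hne
  rcases le_or_gt v n with h | h <;> rcases le_or_gt w n with h' | h'
  · simp only [if_pos h, if_pos h'] at hvw; omega
  · simp only [if_pos h, if_neg (by omega : ¬ w ≤ n)] at hvw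
    exact hB.2 v (by simp only [Finset.mem_Icc]; omega) ⟨hv, by rw [show v + n = w by omega]; exact hw⟩
  · simp only [if_neg (by omega : ¬ v ≤ n), if_pos h'] at hvw
    exact hB.2 w (by simp only [Finset.mem_Icc]; omega) ⟨hw, by rw [show w + n = v by omega]; exact hv⟩
  · simp only [if_neg (by omega : ¬ v ≤ n), if_neg (by omega : ¬ w ≤ n)] at hvw; omega

lemma gMn_mem (n : ℕ) (B : Finset ℕ) (hB : IsIndepMn n B) :
    ∀ v ∈ B, gMn n v ∈ Finset.Icc 1 n := by
  intro v hv
  have hv2 := hB.1 hv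
  simp only [Finset.mem_Icc] at hv2 ⊢
  simp only [gMn]; split_ifs <;> omega

lemma indep_card_le (n : ℕ) (B : Finset ℕ) (hB : IsIndepMn n B) : B.card ≤ n := by
  have : B.card ≤ (Finset.Icc 1 n).card :=
    Finset.card_le_card_of_injOn (gMn n) (gMn_mem n B hB) (gMn_injOn n B hB)
  simpa using this

lemma indep_Icc (n : ℕ) : IsIndepMn n (Finset.Icc 1 n) := by
  constructor
  · intro v hv; simp only [Finset.mem_Icc] at hv ⊢; omega
  · intro i hi ⟨_, h2⟩
    simp only [Finset.mem_Icc] at hi h2; omega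

lemma indepNum_eq (n : ℕ) : indepNumMn n = n := by
  have hmem : n ∈ {k : ℕ | ∃ A : Finset ℕ, IsIndepMn n A ∧ A.card = k} :=
    ⟨Finset.Icc 1 n, indep_Icc n, by simp⟩
  apply le_antisymm
  · apply csSup_le (Set.nonempty_of_mem hmem)
    rintro k ⟨B, hB, rfl⟩
    exact indep_card_le n B hB
  · refine le_csSup ⟨n, ?_⟩ hmem
    rintro k ⟨B, hB, rfl⟩
    exact indep_card_le n B hB

lemma hit_of (n : ℕ) (A B : Finset ℕ) (hB : IsIndepMn n B) (hc : B.card = n)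
    (hBA : B ⊆ A) : ∀ k, 1 ≤ k → k ≤ n → k ∈ A ∨ k + n ∈ A := by
  intro k hk1 hk2
  have himg : B.image (gMn n) = Finset.Icc 1 n := by
    apply Finset.eq_of_subset_of_card_le
    · intro x hx
      simp only [Finset.mem_image] at hx
      obtain ⟨v, hv, rfl⟩ := hx
      exact gMn_mem n B hB v hv
    · rw [Finset.card_image_of_injOn (gMn_injOn n B hB), hc, Nat.card_Icc]
      omega
  have : k ∈ B.image (gMn n) := by rw [himg]; simp only [Finset.mem_Icc]; omega
  simp only [Finset.mem_image] at this
  obtain ⟨v, hv, hgv⟩ := this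
  have hv2 := hB.1 hv
  simp only [Finset.mem_Icc] at hv2
  simp only [gMn] at hgv
  rcases le_or_gt v n with h | h
  · left; rw [if_pos h] at hgv; rw [← hgv]; exact hBA hv
  · right; rw [if_neg (by omega)] at hgv
    rw [show k + n = v by omega]; exact hBA hv

lemma count_A (n : ℕ) (A : Finset ℕ) (hsub : A ⊆ Finset.Icc 1 (2*n))
    (hit : ∀ k, 1 ≤ k → k ≤ n → k ∈ A ∨ k + n ∈ A) :
    A.card = n + ((Finset.Icc 1 n).filter (fun k => k ∈ A ∧ k + n ∈ A)).card := by
  classical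
  set X := (Finset.Icc 1 n).filter (· ∈ A) with hX
  set Y := (Finset.Icc 1 n).filter (fun k => k + n ∈ A) with hY
  have hXY : X ∪ Y = Finset.Icc 1 n := by
    ext k
    simp only [hX, hY, Finset.mem_union, Finset.mem_filter, Finset.mem_Icc]
    constructor
    · rintro (⟨h, _⟩ | ⟨h, _⟩) <;> exact h
    · intro h
      rcases hit k h.1 h.2 with h' | h'
      · exact Or.inl ⟨h, h'⟩
      · exact Or.inr ⟨h, h'⟩
  have hXYi : X ∩ Y = (Finset.Icc 1 n).filter (fun k => k ∈ A ∧ k + n ∈ A) := by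
    ext k
    simp only [hX, hY, Finset.mem_inter, Finset.mem_filter]
    tauto
  have hA : A = X ∪ Y.image (· + n) := by
    ext v
    simp only [Finset.mem_union, Finset.mem_image, hX, hY, Finset.mem_filter, Finset.mem_Icc]
    constructor
    · intro hv
      have := hsub hv
      simp only [Finset.mem_Icc] at this
      rcases le_or_gt v n with h | h
      · exact Or.inl ⟨⟨this.1, h⟩, hv⟩
      · refine Or.inr ⟨v - n, ⟨⟨by omega, by omega⟩, ?_⟩, by omega⟩
        rw [show v - n + n = v by omega]; exact hv
    · rintro (⟨_, hv⟩ | ⟨k, ⟨_, hk⟩, rfl⟩)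
      · exact hv
      · exact hk
  have hdisj : Disjoint X (Y.image (· + n)) := by
    rw [Finset.disjoint_left]
    intro v hv hv'
    simp only [hX, Finset.mem_filter, Finset.mem_Icc] at hv
    simp only [hY, Finset.mem_image, Finset.mem_filter, Finset.mem_Icc] at hv'
    obtain ⟨k, ⟨⟨hk1, _⟩, _⟩, rfl⟩ := hv'
    omega
  have hYc : (Y.image (· + n)).card = Y.card :=
    Finset.card_image_of_injective _ (add_left_injective n)
  have h1 : A.card = X.card + Y.card := by
    rw [hA, Finset.card_union_of_disjoint hdisj, hYc]
  have h2 := Finset.card_union_add_card_inter X Y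
  rw [hXY, hXYi] at h2
  simp only [Nat.card_Icc] at h2
  omega

lemma count_split (n : ℕ) (hn : 1 ≤ n) (A : Finset ℕ) (h2n : 2*n ∈ A) :
    ((Finset.Icc 1 n).filter (fun k => k ∈ A ∧ k + n ∈ A)).card
      = ((Finset.Icc 1 (n-1)).filter (fun k => k ∈ A ∧ k + n ∈ A)).card
        + (if n ∈ A then 1 else 0) := by
  classical
  have hins : Finset.Icc 1 n = insert n (Finset.Icc 1 (n-1)) := by
    ext k
    simp only [Finset.mem_insert, Finset.mem_Icc]
    omega
  rw [hins, Finset.filter_insert]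
  have hnn : n + n = 2*n := by ring
  by_cases hmem : n ∈ A
  · rw [if_pos ⟨hmem, by rw [hnn]; exact h2n⟩, if_pos hmem,
      Finset.card_insert_of_notMem (by simp only [Finset.mem_filter, Finset.mem_Icc]; omega)]
  · rw [if_neg (by tauto), if_neg hmem, Nat.add_zero]

def FfulMn (n : ℕ) (A : Finset ℕ) : Finset ℕ :=
  (Finset.Icc 1 (n-1)).filter (fun k => k ∈ A ∧ k + n ∈ A)
def SsingMn (n : ℕ) (A : Finset ℕ) : Finset ℕ := Finset.Icc 1 (n-1) \ FfulMn n A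
def repMn (n : ℕ) (A : Finset ℕ) (k : ℕ) : ℕ := if k ∈ A then k else k + n
def L1Mn (n : ℕ) (A : Finset ℕ) : List ℕ :=
  2*n :: (((SsingMn n A).sort (·≤·)).map (repMn n A)
    ++ ((FfulMn n A).sort (·≤·)).map (repMn n A))
def LMn (n : ℕ) (A : Finset ℕ) : List ℕ := L1Mn n A ++ (L1Mn n A).map (partnerMn n)

lemma Fful_subset (n : ℕ) (A : Finset ℕ) : FfulMn n A ⊆ Finset.Icc 1 (n-1) :=
  Finset.filter_subset _ _

lemma Ssing_card (n : ℕ) (A : Finset ℕ) :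
    (SsingMn n A).card = (n - 1) - (FfulMn n A).card := by
  rw [SsingMn, Finset.card_sdiff_of_subset (Fful_subset n A), Nat.card_Icc]
  omega

lemma Fful_card_le (n : ℕ) (A : Finset ℕ) : (FfulMn n A).card ≤ n - 1 := by
  have := Finset.card_le_card (Fful_subset n A)
  simpa using this

lemma L1_length (n : ℕ) (hn : 1 ≤ n) (A : Finset ℕ) : (L1Mn n A).length = n := by
  simp only [L1Mn, List.length_cons, List.length_append, List.length_map,
    Finset.length_sort, Ssing_card]
  have := Fful_card_le n A
  omega

lemma L_length (n : ℕ) (hn : 1 ≤ n) (A : Finset ℕ) : (LMn n A).length = 2*n := by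
  simp only [LMn, List.length_append, List.length_map, L1_length n hn]
  ring

lemma gMn_rep (n : ℕ) (A : Finset ℕ) (k : ℕ) (h1 : 1 ≤ k) (h2 : k ≤ n - 1) :
    gMn n (repMn n A k) = k := by
  simp only [gMn, repMn]; split_ifs <;> omega

lemma rep_bounds (n : ℕ) (A : Finset ℕ) (k : ℕ) (h1 : 1 ≤ k) (h2 : k ≤ n - 1) :
    1 ≤ repMn n A k ∧ repMn n A k ≤ 2*n - 1 := by
  simp only [repMn]; split_ifs <;> omega

lemma gMn_L1 (n : ℕ) (hn : 1 ≤ n) (A : Finset ℕ) :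
    (L1Mn n A).map (gMn n)
      = n :: ((SsingMn n A).sort (·≤·) ++ (FfulMn n A).sort (·≤·)) := by
  simp only [L1Mn, List.map_cons, List.map_append, List.map_map]
  congr 1
  · simp only [gMn]; split_ifs <;> omega
  congr 1
  · rw [show (gMn n ∘ repMn n A) = fun k => gMn n (repMn n A k) from rfl]
    conv_rhs => rw [← List.map_id ((SsingMn n A).sort (·≤·))]
    apply List.map_congr_left
    intro k hk
    rw [Finset.mem_sort] at hk
    simp only [SsingMn, Finset.mem_sdiff, Finset.mem_Icc] at hk
    exact gMn_rep n A k hk.1.1 hk.1.2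
  · conv_rhs => rw [← List.map_id ((FfulMn n A).sort (·≤·))]
    apply List.map_congr_left
    intro k hk
    rw [Finset.mem_sort] at hk
    simp only [FfulMn, Finset.mem_filter, Finset.mem_Icc] at hk
    exact gMn_rep n A k hk.1.1 hk.1.2

lemma gMn_L1_nodup (n : ℕ) (hn : 1 ≤ n) (A : Finset ℕ) :
    ((L1Mn n A).map (gMn n)).Nodup := by
  rw [gMn_L1 n hn]
  refine List.Nodup.cons ?_ ?_
  · intro hmem
    rw [List.mem_append] at hmem
    rcases hmem with h | h <;> rw [Finset.mem_sort] at h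
    · simp only [SsingMn, Finset.mem_sdiff, Finset.mem_Icc] at h; omega
    · simp only [FfulMn, Finset.mem_filter, Finset.mem_Icc] at h; omega
  · refine List.Nodup.append (Finset.sort_nodup _ _) (Finset.sort_nodup _ _) ?_
    intro k hk hk'
    rw [Finset.mem_sort] at hk hk'
    simp only [SsingMn, Finset.mem_sdiff] at hk
    exact hk.2 hk'

lemma L1_nodup (n : ℕ) (hn : 1 ≤ n) (A : Finset ℕ) : (L1Mn n A).Nodup :=
  (gMn_L1_nodup n hn A).of_map

lemma L1_mem_bounds (n : ℕ) (hn : 1 ≤ n) (A : Finset ℕ) :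
    ∀ v ∈ L1Mn n A, 1 ≤ v ∧ v ≤ 2*n := by
  intro v hv
  simp only [L1Mn, List.mem_cons, List.mem_append, List.mem_map] at hv
  rcases hv with rfl | (⟨k, hk, rfl⟩ | ⟨k, hk, rfl⟩) <;>
    [omega; skip; skip] <;> rw [Finset.mem_sort] at hk
  · simp only [SsingMn, Finset.mem_sdiff, Finset.mem_Icc] at hk
    have := rep_bounds n A k hk.1.1 hk.1.2; omega
  · simp only [FfulMn, Finset.mem_filter, Finset.mem_Icc] at hk
    have := rep_bounds n A k hk.1.1 hk.1.2; omega

lemma partner_bounds (n v : ℕ) (h1 : 1 ≤ v) (h2 : v ≤ 2*n) :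
    1 ≤ partnerMn n v ∧ partnerMn n v ≤ 2*n := by
  simp only [partnerMn]; split_ifs <;> omega

lemma gMn_partner (n v : ℕ) (h1 : 1 ≤ v) (h2 : v ≤ 2*n) :
    gMn n (partnerMn n v) = gMn n v := by
  simp only [gMn, partnerMn]; split_ifs <;> omega

lemma partner_ne (n v : ℕ) (hn : 1 ≤ n) (h1 : 1 ≤ v) (h2 : v ≤ 2*n) :
    partnerMn n v ≠ v := by
  simp only [partnerMn]; split_ifs <;> omega

lemma L_nodup (n : ℕ) (hn : 1 ≤ n) (A : Finset ℕ) : (LMn n A).Nodup := by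
  refine List.Nodup.append (L1_nodup n hn A) ?_ ?_
  · refine List.Nodup.map_on ?_ (L1_nodup n hn A)
    intro v hv w hw hvw
    have hvb := L1_mem_bounds n hn A v hv
    have hwb := L1_mem_bounds n hn A w hw
    have : gMn n (partnerMn n v) = gMn n (partnerMn n w) := by rw [hvw]
    rw [gMn_partner n v hvb.1 hvb.2, gMn_partner n w hwb.1 hwb.2] at this
    exact List.inj_on_of_nodup_map (gMn_L1_nodup n hn A) hv hw this
  · intro v hv hv'
    rw [List.mem_map] at hv'
    obtain ⟨w, hw, hvw⟩ := hv'
    have hwb := L1_mem_bounds n hn A w hw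
    have hgvw : gMn n v = gMn n w := by
      rw [← hvw, gMn_partner n w hwb.1 hwb.2]
    have := List.inj_on_of_nodup_map (gMn_L1_nodup n hn A) hv hw hgvw
    subst this
    exact partner_ne n v hn hwb.1 hwb.2 hvw

lemma L_mem_bounds (n : ℕ) (hn : 1 ≤ n) (A : Finset ℕ) :
    ∀ v ∈ LMn n A, 1 ≤ v ∧ v ≤ 2*n := by
  intro v hv
  simp only [LMn, List.mem_append, List.mem_map] at hv
  rcases hv with h | ⟨w, hw, rfl⟩
  · exact L1_mem_bounds n hn A v h
  · have := L1_mem_bounds n hn A w hw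
    exact partner_bounds n w this.1 this.2

lemma L_getD_zero (n : ℕ) (hn : 1 ≤ n) (A : Finset ℕ) : (LMn n A).getD 0 0 = 2*n := by
  rw [LMn, List.getD_append _ _ _ _ (by rw [L1_length n hn]; omega)]
  rfl

lemma L_getD_shift (n : ℕ) (hn : 1 ≤ n) (A : Finset ℕ) (p : ℕ) (hp : p < n) :
    (LMn n A).getD (p + n) 0 = partnerMn n ((LMn n A).getD p 0) := by
  rw [LMn, List.getD_append_right _ _ _ _ (by rw [L1_length n hn]; omega),
    List.getD_append _ _ _ _ (by rw [L1_length n hn]; omega), L1_length n hn,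
    show p + n - n = p by omega,
    List.getD_eq_getElem _ _ (by rw [List.length_map, L1_length n hn]; omega),
    List.getD_eq_getElem _ _ (by rw [L1_length n hn]; omega),
    List.getElem_map]

lemma L_getD_S (n : ℕ) (hn : 1 ≤ n) (A : Finset ℕ) (p : ℕ) (hp1 : 1 ≤ p)
    (hp2 : p ≤ (SsingMn n A).card) :
    ∃ k ∈ SsingMn n A, (LMn n A).getD p 0 = repMn n A k := by
  have hpn : p < n := by
    have h1 := Ssing_card n A
    omega
  obtain ⟨q, rfl⟩ : ∃ q, p = q + 1 := ⟨p - 1, by omega⟩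
  have hlen : q < (((SsingMn n A).sort (·≤·)).map (repMn n A)).length := by
    rw [List.length_map, Finset.length_sort]; omega
  have hq : q < ((SsingMn n A).sort (·≤·)).length := by
    rw [Finset.length_sort]; omega
  refine ⟨((SsingMn n A).sort (·≤·)).get ⟨q, hq⟩, ?_, ?_⟩
  · rw [← Finset.mem_sort (α := ℕ) (·≤·)]
    exact List.get_mem _ _
  · rw [LMn, List.getD_append _ _ _ _ (by rw [L1_length n hn]; omega), L1Mn,
      List.getD_cons_succ, List.getD_append _ _ _ _ hlen,
      List.getD_eq_getElem _ _ hlen, List.getElem_map]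
    rfl

lemma L_getD_F (n : ℕ) (hn : 1 ≤ n) (A : Finset ℕ) (p : ℕ)
    (hp1 : (SsingMn n A).card < p) (hp2 : p < n) :
    ∃ k ∈ FfulMn n A, (LMn n A).getD p 0 = repMn n A k := by
  have hS := Ssing_card n A
  have hF := Fful_card_le n A
  obtain ⟨q, rfl⟩ : ∃ q, p = q + 1 := ⟨p - 1, by omega⟩
  have hlen2 : q - (SsingMn n A).card < (((FfulMn n A).sort (·≤·)).map (repMn n A)).length := by
    rw [List.length_map, Finset.length_sort]; omega
  have hq : q - (SsingMn n A).card < ((FfulMn n A).sort (·≤·)).length := by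
    rw [Finset.length_sort]; omega
  refine ⟨((FfulMn n A).sort (·≤·)).get ⟨q - (SsingMn n A).card, hq⟩, ?_, ?_⟩
  · rw [← Finset.mem_sort (α := ℕ) (·≤·)]
    exact List.get_mem _ _
  · rw [LMn, List.getD_append _ _ _ _ (by rw [L1_length n hn]; omega), L1Mn,
      List.getD_cons_succ,
      List.getD_append_right _ _ _ _ (by rw [List.length_map, Finset.length_sort]; omega),
      List.length_map, Finset.length_sort,
      List.getD_eq_getElem _ _ (by rw [List.length_map, Finset.length_sort]; omega),
      List.getElem_map]
    rfl

/-- Every member of the star `𝓟ʳ_{2n}(Mₙ)` (`n ≤ r < 2n`) is an interval of length `r`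
in some good cyclic ordering `c` with `c(0) = 2n`. -/
theorem star_mem_isInterval (n r : ℕ) (hn : 1 ≤ n) (hnr : n ≤ r) (hr2 : r < 2 * n)
    (A : Finset ℕ) (hA : A ∈ famP n r) (h2n : 2 * n ∈ A) :
    ∃ c : ZMod (2 * n) → ℕ, IsGoodCyclic n c ∧ c 0 = 2 * n ∧
      ∃ j : ZMod (2 * n), A = gInterval n c r j := by
  classical
  haveI : NeZero (2*n) := ⟨by omega⟩
  have key : A ⊆ Finset.Icc 1 (2*n) ∧ A.card = r ∧
      ∃ B, B ⊆ A ∧ IsIndepMn n B ∧ B.card = n := by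
    rcases hA with ⟨hcard, hindep⟩ | ⟨hsub, hcard, B, hBA, hBi, hBc⟩
    · refine ⟨hindep.1, hcard, A, subset_rfl, hindep, ?_⟩
      have := indep_card_le n A hindep; omega
    · exact ⟨hsub, hcard, B, hBA, hBi, by rw [hBc, indepNum_eq]⟩
  obtain ⟨hsub, hcard, B, hBA, hBi, hBc⟩ := key
  have hit : ∀ k, 1 ≤ k → k ≤ n → k ∈ A ∨ k + n ∈ A := hit_of n A B hBi hBc hBA
  have hcount : r = n + (FfulMn n A).card + (if n ∈ A then 1 else 0) := by
    have h1 := count_A n A hsub hit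
    have h2 := count_split n hn A h2n
    have h3 : FfulMn n A = (Finset.Icc 1 (n-1)).filter (fun k => k ∈ A ∧ k + n ∈ A) := rfl
    rw [← h3] at h2
    omega
  set t := (FfulMn n A).card with ht
  have htle : t ≤ n - 1 := Fful_card_le n A
  have hScard : (SsingMn n A).card = n - 1 - t := Ssing_card n A
  set L := LMn n A with hLdef
  have hLlen : L.length = 2*n := L_length n hn A
  have hLnd : L.Nodup := L_nodup n hn A
  set c : ZMod (2*n) → ℕ := fun i => L.getD i.val 0 with hc
  have hgetmem : ∀ p : ℕ, p < 2*n → 1 ≤ L.getD p 0 ∧ L.getD p 0 ≤ 2*n := by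
    intro p hp
    have hmem : L.getD p 0 ∈ L := by
      rw [List.getD_eq_getElem _ _ (by omega)]
      exact List.getElem_mem _
    exact L_mem_bounds n hn A _ hmem
  have hinj : Function.Injective c := by
    intro i j hij
    have hi : i.val < 2*n := ZMod.val_lt i
    have hj : j.val < 2*n := ZMod.val_lt j
    simp only [hc] at hij
    rw [List.getD_eq_getElem L 0 (show i.val < L.length by omega),
      List.getD_eq_getElem L 0 (show j.val < L.length by omega)] at hij
    have := (List.Nodup.getElem_inj_iff hLnd).mp hij
    exact ZMod.val_injective _ this
  have hshift : ∀ i : ZMod (2*n), c (i + (n : ZMod (2*n))) = partnerMn n (c i) := by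
    intro i
    have hi : i.val < 2*n := ZMod.val_lt i
    have hval : (i + (n : ZMod (2*n))).val = (i.val + n) % (2*n) := by
      rw [ZMod.val_add, ZMod.val_natCast, Nat.mod_eq_of_lt (show n < 2*n by omega)]
    show L.getD (i + (n : ZMod (2*n))).val 0 = partnerMn n (L.getD i.val 0)
    rw [hval]
    rcases lt_or_ge i.val n with h | h
    · rw [Nat.mod_eq_of_lt (by omega)]
      exact L_getD_shift n hn A i.val h
    · have hval2 : (i.val + n) % (2*n) = i.val - n := by
        rw [show i.val + n = (i.val - n) + 2*n by omega, Nat.add_mod_right,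
          Nat.mod_eq_of_lt (by omega)]
      rw [hval2]
      have hsh := L_getD_shift n hn A (i.val - n) (by omega)
      rw [show i.val - n + n = i.val by omega] at hsh
      rw [hsh]
      have hb := hgetmem (i.val - n) (by omega)
      exact (partner_invol n _ hb.1 hb.2).symm
  have hzero : c 0 = 2*n := by
    show L.getD (0 : ZMod (2*n)).val 0 = 2*n
    rw [ZMod.val_zero]
    exact L_getD_zero n hn A
  set j : ZMod (2*n) := ((2*n - t : ℕ) : ZMod (2*n)) with hj
  refine ⟨c, ⟨hinj, ?_, hshift⟩, hzero, j, ?_⟩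
  · intro i
    have hb := hgetmem i.val (ZMod.val_lt i)
    simp only [Finset.mem_Icc]
    exact hb
  · rw [gInterval]
    have hcval : ∀ i : ℕ, c (j + (i : ZMod (2*n))) = L.getD ((2*n - t + i) % (2*n)) 0 := by
      intro i
      have : j + (i : ZMod (2*n)) = ((2*n - t + i : ℕ) : ZMod (2*n)) := by
        rw [hj, Nat.cast_add]
      rw [this]
      show L.getD (((2*n - t + i : ℕ) : ZMod (2*n))).val 0 = _
      rw [ZMod.val_natCast]
    have hmemA : ∀ i, i < r → c (j + (i : ZMod (2*n))) ∈ A := by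
      intro i hi
      rw [hcval]
      rcases lt_or_ge i t with hit' | hit'
      · have hmod : (2*n - t + i) % (2*n) = (n - t + i) + n := by
          rw [Nat.mod_eq_of_lt (by omega)]; omega
        rw [hmod, L_getD_shift n hn A (n - t + i) (by omega)]
        obtain ⟨k, hk, hrep⟩ := L_getD_F n hn A (n - t + i) (by omega) (by omega)
        simp only [FfulMn, Finset.mem_filter, Finset.mem_Icc] at hk
        rw [hrep, repMn, if_pos hk.2.1, partnerMn, if_pos (by omega)]
        exact hk.2.2
      · have hmod : (2*n - t + i) % (2*n) = i - t := by
          rw [show 2*n - t + i = (i - t) + 2*n by omega, Nat.add_mod_right,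
            Nat.mod_eq_of_lt (by omega)]
        rw [hmod]
        rcases Nat.eq_zero_or_pos (i - t) with h0 | hpos
        · rw [h0, L_getD_zero n hn A]; exact h2n
        · rcases le_or_gt (i - t) (n - 1 - t) with hle | hgt
          · obtain ⟨k, hk, hrep⟩ := L_getD_S n hn A (i - t) hpos (by omega)
            simp only [SsingMn, Finset.mem_sdiff, Finset.mem_Icc] at hk
            rw [hrep, repMn]
            rcases hit k hk.1.1 (by omega) with hka | hka
            · rw [if_pos hka]; exact hka
            · by_cases hka' : k ∈ A
              · rw [if_pos hka']; exact hka'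
              · rw [if_neg hka']; exact hka
          · rcases lt_or_ge (i - t) n with hltn | hgen
            · obtain ⟨k, hk, hrep⟩ := L_getD_F n hn A (i - t) (by omega) hltn
              simp only [FfulMn, Finset.mem_filter, Finset.mem_Icc] at hk
              rw [hrep, repMn, if_pos hk.2.1]
              exact hk.2.1
            · have hieq : i - t = n := by
                by_cases hnA : n ∈ A
                · rw [if_pos hnA] at hcount; omega
                · rw [if_neg hnA] at hcount; omega
              have hnA : n ∈ A := by
                by_contra hnA
                rw [if_neg hnA] at hcount; omega
              rw [hieq, show n = 0 + n by omega, L_getD_shift n hn A 0 (by omega),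
                L_getD_zero n hn A, partnerMn, if_neg (by omega)]
              rw [show 2*n - n = n by omega]
              exact hnA
    have hinjOn : Set.InjOn (fun i : ℕ => c (j + (i : ZMod (2*n)))) (Finset.range r) := by
      intro i1 h1 i2 h2 heq
      simp only [Finset.coe_range, Set.mem_Iio] at h1 h2
      have := hinj heq
      have := add_left_cancel this
      have hv : (i1 : ZMod (2*n)).val = (i2 : ZMod (2*n)).val := by rw [this]
      rw [ZMod.val_natCast, ZMod.val_natCast, Nat.mod_eq_of_lt (by omega),
        Nat.mod_eq_of_lt (by omega)] at hv
      exact hv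
    have hsub' : (Finset.range r).image (fun i : ℕ => c (j + (i : ZMod (2*n)))) ⊆ A := by
      intro v hv
      simp only [Finset.mem_image, Finset.mem_range] at hv
      obtain ⟨i, hi, rfl⟩ := hv
      exact hmemA i hi
    have hcardim : ((Finset.range r).image (fun i : ℕ => c (j + (i : ZMod (2*n))))).card = r := by
      rw [Finset.card_image_of_injOn hinjOn, Finset.card_range]
    exact (Finset.eq_of_subset_of_card_le hsub' (by rw [hcardim, hcard])).symm
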